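/- Let T be a self-adjoint closed range operator on a complex Hilbert space. Then: (i) the MP-proper splitting T = T† − (T† − T) converges if and only if ‖P_T − T²‖ < 1; (ii) the projection proper splitting T = P_T − (P_T − T) converges if and only if ‖P_T − T‖ < 1. -/

import Mathlib

open ContinuousLinearMap

/-- `Td` is the Moore–Penrose inverse of `T`. -/
def IsMoorePenroseInverse {H : Type*} [NormedAddCommGroup H] [InnerProductSpace ℂ H]
    [CompleteSpace H] (T Td : H →L[ℂ] H) : Prop :=
  T ∘L Td ∘L T = T ∧ Td ∘L T ∘L Td = Td ∧
    IsSelfAdjoint (T ∘L Td) ∧ IsSelfAdjoint (Td ∘L T)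
/-- For self-adjoint closed range `T`: the MP-proper splitting converges iff
`‖P_T - T²‖ < 1`, and the projection proper splitting converges iff `‖P_T - T‖ < 1`. -/
theorem MP_and_projection_splitting_convergence
    {H : Type*} [NormedAddCommGroup H] [InnerProductSpace ℂ H] [CompleteSpace H]
    (T Td P : H →L[ℂ] H)
    (hT : IsSelfAdjoint T)
    (hTcr : IsClosed (LinearMap.range (T : H →ₗ[ℂ] H) : Set H))
    (hTd : IsMoorePenroseInverse T Td)
    -- P is the orthogonal projection onto ran T
    (hP : IsSelfAdjoint P) (hP2 : P ∘L P = P)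
    (hPran : LinearMap.range (P : H →ₗ[ℂ] H) = LinearMap.range (T : H →ₗ[ℂ] H)) :
    (spectralRadius ℂ (T ∘L (Td - T)) < 1 ↔ ‖P - T ∘L T‖ < 1) ∧
      (spectralRadius ℂ (P ∘L (P - T)) < 1 ↔ ‖P - T‖ < 1) := by
  obtain ⟨h1, h2, h3, h4⟩ := hTd
  set Q := T ∘L Td with hQdef
  have hPid : ∀ y ∈ LinearMap.range (P : H →ₗ[ℂ] H), P y = y := by
    rintro _ ⟨z, rfl⟩
    have := congrArg (fun f : H →L[ℂ] H => f z) hP2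
    simpa using this
  have hQid : ∀ y ∈ LinearMap.range (T : H →ₗ[ℂ] H), Q y = y := by
    rintro _ ⟨z, rfl⟩
    have := congrArg (fun f : H →L[ℂ] H => f z) h1
    simpa [hQdef] using this
  have hPQ : P ∘L Q = Q := by
    ext x
    have : Q x ∈ LinearMap.range (P : H →ₗ[ℂ] H) := by
      rw [hPran]; exact ⟨Td x, rfl⟩
    simpa using hPid _ this
  have hQP : Q ∘L P = P := by
    ext x
    have : P x ∈ LinearMap.range (T : H →ₗ[ℂ] H) := by
      rw [← hPran]; exact ⟨x, rfl⟩
    simpa using hQid _ this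
  have hPT : P ∘L T = T := by
    ext x
    have : T x ∈ LinearMap.range (P : H →ₗ[ℂ] H) := by rw [hPran]; exact ⟨x, rfl⟩
    simpa using hPid _ this
  have hPadj : ContinuousLinearMap.adjoint P = P :=
    (ContinuousLinearMap.isSelfAdjoint_iff'.mp hP)
  have hQadj : ContinuousLinearMap.adjoint Q = Q :=
    (ContinuousLinearMap.isSelfAdjoint_iff'.mp h3)
  have hPeqQ : P = Q := by
    have h := congrArg ContinuousLinearMap.adjoint hQP
    rw [ContinuousLinearMap.adjoint_comp, hPadj, hQadj, hPQ] at h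
    exact h.symm
  have e1 : T ∘L (Td - T) = P - T ∘L T := by
    rw [comp_sub, ← hQdef, hPeqQ]
  have e2 : P ∘L (P - T) = P - T := by
    rw [comp_sub, hP2, hPT]
  have hTadj : ContinuousLinearMap.adjoint T = T :=
    (ContinuousLinearMap.isSelfAdjoint_iff'.mp hT)
  have sa1 : IsSelfAdjoint (P - T ∘L T) := by
    rw [ContinuousLinearMap.isSelfAdjoint_iff'] at *
    rw [map_sub, ContinuousLinearMap.adjoint_comp, hTadj, hPadj]
  have sa2 : IsSelfAdjoint (P - T) := hP.sub hT
  constructor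
  · rw [e1, sa1.spectralRadius_eq_nnnorm]
    exact_mod_cast Iff.rfl
  · rw [e2, sa2.spectralRadius_eq_nnnorm]
    exact_mod_cast Iff.rfl
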